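/- arXiv:2401.05853 — 2 statements merged into one kernel-verified Lean document; each statement's English description precedes it below -/
import Mathlib

section
/- Let $p\equiv 3\pmod 4$ be a prime and $\zeta = e^{2\pi i/p}$. Then $\prod_{1\le j<k\le (p-1)/2}(\zeta^{j^2}-\zeta^{k^2})^2 = (-p)^{(p-3)/4}$. -/
open Finset Complex Real

namespace Aux9

variable (p : ℕ) [Fact p.Prime]

open scoped Classical in
noncomputable def Sq : Finset (ZMod p) := univ.filter (fun a => a ≠ 0 ∧ IsSquare a)

lemma mem_Sq {a : ZMod p} : a ∈ Sq p ↔ a ≠ 0 ∧ IsSquare a := by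
  simp [Sq]

variable {p}

lemma two_m (hp3 : p % 4 = 3) : p = 2 * ((p - 1) / 2) + 1 := by
  have := (Fact.out : p.Prime).two_le
  omega

lemma cast_sq_inj (hp3 : p % 4 = 3) {j k : ℕ} (hj : j ∈ Icc 1 ((p-1)/2))
    (hk : k ∈ Icc 1 ((p-1)/2)) (h : ((j : ZMod p))^2 = ((k : ZMod p))^2) : j = k := by
  have hpm := two_m hp3
  simp only [mem_Icc] at hj hk
  have h' : ((j : ZMod p)) * j = (k : ZMod p) * k := by
    have := h; rw [sq, sq] at this; exact this
  rcases mul_self_eq_mul_self_iff.mp h' with h1 | h1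
  · have := (ZMod.natCast_eq_natCast_iff' j k p).mp h1
    rw [Nat.mod_eq_of_lt (by omega), Nat.mod_eq_of_lt (by omega)] at this
    exact this
  · exfalso
    have h2 : ((j + k : ℕ) : ZMod p) = 0 := by push_cast; rw [h1]; ring
    have h3 : p ∣ j + k := (ZMod.natCast_eq_zero_iff _ _).mp h2
    have := Nat.le_of_dvd (by omega) h3
    omega

lemma cast_sq_mem (hp3 : p % 4 = 3) {j : ℕ} (hj : j ∈ Icc 1 ((p-1)/2)) :
    ((j : ZMod p))^2 ∈ Sq p := by
  have hpm := two_m hp3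
  simp only [mem_Icc] at hj
  rw [mem_Sq]
  refine ⟨pow_ne_zero _ ?_, ⟨_, sq _⟩⟩
  intro h0
  have h3 : p ∣ j := (ZMod.natCast_eq_zero_iff _ _).mp h0
  have := Nat.le_of_dvd (by omega) h3
  omega

lemma cast_sq_surj (hp3 : p % 4 = 3) {a : ZMod p} (ha : a ∈ Sq p) :
    ∃ j ∈ Icc 1 ((p-1)/2), ((j : ZMod p))^2 = a := by
  have hpm := two_m hp3
  rw [mem_Sq] at ha
  obtain ⟨ha0, x, hx⟩ := ha
  have hx0 : x ≠ 0 := by rintro rfl; rw [mul_zero] at hx; exact ha0 hx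
  have hv1 : 1 ≤ x.val :=
    Nat.one_le_iff_ne_zero.mpr (fun h => hx0 ((ZMod.val_eq_zero x).mp h))
  have hvp : x.val < p := ZMod.val_lt x
  have hxv : ((x.val : ℕ) : ZMod p) = x := ZMod.natCast_rightInverse x
  rcases le_or_gt x.val ((p-1)/2) with h | h
  · exact ⟨x.val, mem_Icc.mpr ⟨hv1, h⟩, by rw [hxv, sq, ← hx]⟩
  · refine ⟨p - x.val, mem_Icc.mpr ⟨by omega, by omega⟩, ?_⟩
    have : ((p - x.val : ℕ) : ZMod p) = -x := by
      rw [Nat.cast_sub hvp.le, ZMod.natCast_self, hxv]; ring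
    rw [this, neg_sq, sq, ← hx]

lemma card_Sq (hp3 : p % 4 = 3) : (Sq p).card = (p - 1) / 2 := by
  have h : (Icc 1 ((p-1)/2)).card = (Sq p).card :=
    Finset.card_bij (fun j _ => ((j : ZMod p))^2) (fun j hj => cast_sq_mem hp3 hj)
      (fun j hj k hk h => cast_sq_inj hp3 hj hk h)
      (fun a ha => by obtain ⟨j, hj, hja⟩ := cast_sq_surj hp3 ha; exact ⟨j, hj, hja⟩)
  rw [← h, Nat.card_Icc]; omega

end Aux9

namespace Aux9

variable {p : ℕ} [Fact p.Prime]

open scoped Classical in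
noncomputable def Q (p : ℕ) [Fact p.Prime] (s : ZMod p) : Finset (ZMod p × ZMod p) :=
  (Sq p ×ˢ Sq p).filter (fun y => y.1 - y.2 = s)

lemma mem_Q {s : ZMod p} {y : ZMod p × ZMod p} :
    y ∈ Q p s ↔ y.1 ∈ Sq p ∧ y.2 ∈ Sq p ∧ y.1 - y.2 = s := by
  simp [Q, mem_product, and_assoc]

lemma card_Q_neg (s : ZMod p) : (Q p (-s)).card = (Q p s).card := by
  refine Finset.card_bij' (fun y _ => (y.2, y.1)) (fun y _ => (y.2, y.1)) ?_ ?_ ?_ ?_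
  · intro y hy
    rw [mem_Q] at hy ⊢
    exact ⟨hy.2.1, hy.1, by linear_combination -hy.2.2⟩
  · intro y hy
    rw [mem_Q] at hy ⊢
    exact ⟨hy.2.1, hy.1, by linear_combination -hy.2.2⟩
  · intro y _; rfl
  · intro y _; rfl

lemma card_Q_scale {t : ZMod p} (ht : t ≠ 0) (s : ZMod p) :
    (Q p (t * t * s)).card = (Q p s).card := by
  have htt : t * t ≠ 0 := mul_ne_zero ht ht
  have hl : ∀ a : ZMod p, (t*t)⁻¹ * (t * t * a) = a := fun a => by
    rw [← mul_assoc, inv_mul_cancel₀ htt, one_mul]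
  have hr : ∀ a : ZMod p, t * t * ((t*t)⁻¹ * a) = a := fun a => by
    rw [← mul_assoc, mul_inv_cancel₀ htt, one_mul]
  refine (Finset.card_bij' (fun y _ => (t * t * y.1, t * t * y.2))
    (fun y _ => ((t*t)⁻¹ * y.1, (t*t)⁻¹ * y.2)) ?_ ?_ ?_ ?_).symm
  · intro y hy
    rw [mem_Q, mem_Sq, mem_Sq] at hy ⊢
    obtain ⟨⟨h1, h1s⟩, ⟨h2, h2s⟩, hd⟩ := hy
    exact ⟨⟨mul_ne_zero htt h1, IsSquare.mul ⟨t, rfl⟩ h1s⟩,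
      ⟨mul_ne_zero htt h2, IsSquare.mul ⟨t, rfl⟩ h2s⟩, by linear_combination (t*t) * hd⟩
  · intro y hy
    rw [mem_Q, mem_Sq, mem_Sq] at hy ⊢
    obtain ⟨⟨h1, h1s⟩, ⟨h2, h2s⟩, hd⟩ := hy
    have hi : ((t*t)⁻¹ : ZMod p) ≠ 0 := inv_ne_zero htt
    refine ⟨⟨mul_ne_zero hi h1, IsSquare.mul ⟨t⁻¹, by rw [mul_inv]⟩ h1s⟩,
      ⟨mul_ne_zero hi h2, IsSquare.mul ⟨t⁻¹, by rw [mul_inv]⟩ h2s⟩, ?_⟩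
    have := hl s
    linear_combination (t*t)⁻¹ * hd + this
  · intro y _
    exact Prod.ext (hl y.1) (hl y.2)
  · intro y _
    exact Prod.ext (hr y.1) (hr y.2)

lemma sq_or_neg_sq (hp3 : p % 4 = 3) {z : ZMod p} (hz : z ≠ 0) (h : ¬ IsSquare z) :
    IsSquare (-z) := by
  have h1 : (quadraticChar (ZMod p)) z = -1 := quadraticChar_neg_one_iff_not_isSquare.mpr h
  have hn1 : ¬ IsSquare (-1 : ZMod p) := by
    rw [ZMod.exists_sq_eq_neg_one_iff]; simp [hp3]
  have h2 : (quadraticChar (ZMod p)) (-1) = -1 := quadraticChar_neg_one_iff_not_isSquare.mpr hn1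
  have h3 : (quadraticChar (ZMod p)) (-z) = 1 := by
    rw [show (-z) = (-1) * z by ring, map_mul, h1, h2]; ring
  exact (quadraticChar_one_iff_isSquare (neg_ne_zero.mpr hz)).mp h3

end Aux9

namespace Aux9

variable {p : ℕ} [Fact p.Prime]

lemma card_Q_const (hp3 : p % 4 = 3) {s s' : ZMod p} (hs : s ≠ 0) (hs' : s' ≠ 0) :
    (Q p s').card = (Q p s).card := by
  set r := s' * s⁻¹ with hr_def
  have hsinv : s⁻¹ ≠ 0 := inv_ne_zero hs
  have hr : r ≠ 0 := mul_ne_zero hs' hsinv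
  have hrs : r * s = s' := by
    rw [hr_def, mul_assoc, inv_mul_cancel₀ hs, mul_one]
  by_cases hsq : IsSquare r
  · obtain ⟨t, ht⟩ := hsq
    have ht0 : t ≠ 0 := by rintro rfl; rw [mul_zero] at ht; exact hr ht
    rw [← hrs, ht]
    exact card_Q_scale ht0 s
  · obtain ⟨t, ht⟩ := sq_or_neg_sq hp3 hr hsq
    have ht0 : t ≠ 0 := by
      rintro rfl; rw [mul_zero] at ht; exact hr (by linear_combination -ht)
    have h1 : -s' = t * t * s := by rw [← hrs, ← ht]; ring
    calc (Q p s').card = (Q p (-(-s'))).card := by rw [neg_neg]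
    _ = (Q p (-s')).card := card_Q_neg _
    _ = (Q p (t * t * s)).card := by rw [h1]
    _ = (Q p s).card := card_Q_scale ht0 s

lemma sum_card_Q (hp3 : p % 4 = 3) :
    ∑ s ∈ (univ \ {0} : Finset (ZMod p)), (Q p s).card
      = ((p-1)/2) * ((p-1)/2) - (p-1)/2 := by
  classical
  have hmaps : ∀ y ∈ (Sq p).offDiag, y.1 - y.2 ∈ (univ \ {0} : Finset (ZMod p)) := by
    intro y hy
    rw [mem_offDiag] at hy
    simp only [mem_sdiff, mem_univ, mem_singleton, true_and]
    exact sub_ne_zero.mpr hy.2.2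
  have h := Finset.card_eq_sum_card_fiberwise hmaps
  have hfib : ∀ s ∈ (univ \ {0} : Finset (ZMod p)),
      ((Sq p).offDiag.filter (fun y => y.1 - y.2 = s)) = Q p s := by
    intro s hs
    simp only [mem_sdiff, mem_univ, mem_singleton, true_and] at hs
    ext y
    simp only [mem_filter, mem_offDiag, mem_Q]
    constructor
    · rintro ⟨⟨h1, h2, _⟩, hd⟩; exact ⟨h1, h2, hd⟩
    · rintro ⟨h1, h2, hd⟩
      exact ⟨⟨h1, h2, fun hee => hs (by rw [← hd, hee, sub_self])⟩, hd⟩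
  rw [Finset.sum_congr rfl (fun s hs => by rw [hfib s hs])] at h
  rw [← h, Finset.offDiag_card, card_Sq hp3]

lemma card_Q_val (hp3 : p % 4 = 3) {s : ZMod p} (hs : s ≠ 0) :
    (Q p s).card = (p - 3) / 4 := by
  classical
  haveI : NeZero p := ⟨(Fact.out : p.Prime).ne_zero⟩
  obtain ⟨t, ht⟩ : ∃ t, p = 4 * t + 3 := ⟨(p-3)/4, by have := (Fact.out : p.Prime).two_le; omega⟩
  have hconst : ∀ s' ∈ (univ \ {0} : Finset (ZMod p)), (Q p s').card = (Q p s).card := by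
    intro s' hs'
    simp only [mem_sdiff, mem_univ, mem_singleton, true_and] at hs'
    exact card_Q_const hp3 hs hs'
  have hsum := sum_card_Q (p := p) hp3
  rw [Finset.sum_congr rfl hconst, Finset.sum_const, smul_eq_mul] at hsum
  have hcard : (univ \ {0} : Finset (ZMod p)).card = p - 1 := by
    rw [Finset.card_sdiff_of_subset (by simp), Finset.card_singleton, Finset.card_univ, ZMod.card]
  rw [hcard] at hsum
  have hm : (p - 1) / 2 = 2 * t + 1 := by omega
  rw [hm] at hsum
  have h2 : (2*t+1) * (2*t+1) - (2*t+1) = (2*t+1) * (2*t) := by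
    have : (2*t+1) * (2*t+1) = (2*t+1) * (2*t) + (2*t+1) := by ring
    omega
  rw [h2] at hsum
  have h3 : (p - 1) * (Q p s).card = (2*(2*t+1)) * t := by
    rw [hsum]; ring
  have h4 : p - 1 = 2 * (2*t+1) := by omega
  rw [h4] at h3
  have h5 : (Q p s).card = t := Nat.eq_of_mul_eq_mul_left (by omega) h3
  omega

lemma fiber_card (hp3 : p % 4 = 3) {s : ZMod p} (hs : s ≠ 0) :
    (((Icc 1 ((p-1)/2)).offDiag).filter
      (fun x => ((x.1 : ZMod p))^2 - ((x.2 : ZMod p))^2 = s)).card = (p - 3) / 4 := by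
  classical
  rw [← card_Q_val hp3 hs]
  refine Finset.card_bij (fun x _ => (((x.1 : ZMod p))^2, ((x.2 : ZMod p))^2)) ?_ ?_ ?_
  · intro x hx
    rw [mem_filter, mem_offDiag] at hx
    obtain ⟨⟨h1, h2, _⟩, hd⟩ := hx
    rw [mem_Q]
    exact ⟨cast_sq_mem hp3 h1, cast_sq_mem hp3 h2, hd⟩
  · intro x hx x' hx' hee
    rw [mem_filter, mem_offDiag] at hx hx'
    have e1 := congrArg Prod.fst hee
    have e2 := congrArg Prod.snd hee
    simp only at e1 e2
    exact Prod.ext (cast_sq_inj hp3 hx.1.1 hx'.1.1 e1) (cast_sq_inj hp3 hx.1.2.1 hx'.1.2.1 e2)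
  · intro y hy
    rw [mem_Q] at hy
    obtain ⟨hy1, hy2, hd⟩ := hy
    obtain ⟨j, hj, hje⟩ := cast_sq_surj hp3 hy1
    obtain ⟨k, hk, hke⟩ := cast_sq_surj hp3 hy2
    refine ⟨(j, k), ?_, ?_⟩
    · rw [mem_filter, mem_offDiag]
      refine ⟨⟨hj, hk, ?_⟩, by simp only; rw [hje, hke]; exact hd⟩
      intro hjk
      simp only at hjk
      subst hjk
      apply hs
      rw [← hd, ← hje, ← hke, sub_self]
    · simp only
      rw [hje, hke]

end Aux9

namespace Aux9

variable {p : ℕ} [Fact p.Prime]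

noncomputable def ee (p : ℕ) (ζ : ℂ) (s : ZMod p) : ℂ := ζ ^ s.val

variable {ζ : ℂ}

lemma pow_nat (hz : ζ ^ p = 1) (n : ℕ) : ζ ^ n = ee p ζ ((n : ℕ) : ZMod p) := by
  haveI : NeZero p := ⟨(Fact.out : p.Prime).ne_zero⟩
  rw [ee, ZMod.val_natCast]
  conv_lhs => rw [← Nat.div_add_mod n p]
  rw [pow_add, pow_mul, hz, one_pow, one_mul]

lemma ee_add (hz : ζ ^ p = 1) (a b : ZMod p) : ee p ζ (a + b) = ee p ζ a * ee p ζ b := by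
  haveI : NeZero p := ⟨(Fact.out : p.Prime).ne_zero⟩
  have h1 : a + b = (((a.val + b.val : ℕ)) : ZMod p) := by
    push_cast
    rw [ZMod.natCast_rightInverse a, ZMod.natCast_rightInverse b]
  rw [h1, ← pow_nat hz, pow_add]
  rfl

lemma ee_zero : ee p ζ 0 = 1 := by
  haveI : NeZero p := ⟨(Fact.out : p.Prime).ne_zero⟩
  rw [ee, ZMod.val_zero, pow_zero]

lemma ee_sum (hz : ζ ^ p = 1) {ι : Type} (s : Finset ι) (f : ι → ZMod p) :
    ee p ζ (∑ i ∈ s, f i) = ∏ i ∈ s, ee p ζ (f i) := by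
  classical
  induction s using Finset.induction_on with
  | empty => simpa using ee_zero
  | insert _ _ hx ih =>
    rw [Finset.sum_insert hx, Finset.prod_insert hx, ee_add hz, ih]

lemma factor (hz : ζ ^ p = 1) (a b : ZMod p) :
    (ee p ζ a - ee p ζ b)^2
      = -(ee p ζ (a + b)) * ((1 - ee p ζ (a - b)) * (1 - ee p ζ (b - a))) := by
  have hu : ee p ζ (a - b) * ee p ζ b = ee p ζ a := by
    rw [← ee_add hz, sub_add_cancel]
  have hw : ee p ζ (b - a) * ee p ζ a = ee p ζ b := by
    rw [← ee_add hz, sub_add_cancel]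
  have huw : ee p ζ (a - b) * ee p ζ (b - a) = 1 := by
    rw [← ee_add hz, sub_add_sub_cancel', sub_self, ee_zero]
  rw [ee_add hz a b]
  set A := ee p ζ a
  set B := ee p ζ b
  set u := ee p ζ (a - b)
  set w := ee p ζ (b - a)
  linear_combination (-A) * hu + (-B) * hw + (A*B) * huw

lemma prod_one_sub (hζ' : IsPrimitiveRoot ζ p) :
    ∏ s ∈ (univ \ {0} : Finset (ZMod p)), (1 - ee p ζ s) = (p : ℂ) := by
  classical
  haveI : NeZero p := ⟨(Fact.out : p.Prime).ne_zero⟩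
  have hp0 : 0 < p := (Fact.out : p.Prime).pos
  have hcy : ∏ μ ∈ primitiveRoots p ℂ, (1 - μ) = (p : ℂ) := by
    have h1 := Polynomial.cyclotomic_eq_prod_X_sub_primitiveRoots hζ'
    have h2 := congrArg (Polynomial.eval 1) h1
    rw [Polynomial.eval_one_cyclotomic_prime, Polynomial.eval_prod] at h2
    simp only [Polynomial.eval_sub, Polynomial.eval_X, Polynomial.eval_C] at h2
    exact h2.symm
  rw [← hcy]
  refine Finset.prod_bij (fun s _ => ee p ζ s) ?_ ?_ ?_ ?_
  · intro s hs
    simp only [mem_sdiff, mem_univ, mem_singleton, true_and] at hs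
    rw [mem_primitiveRoots hp0]
    refine hζ'.pow_of_coprime s.val (Nat.Coprime.symm ?_)
    rw [(Fact.out : p.Prime).coprime_iff_not_dvd]
    intro hdvd
    have h1 : 0 < s.val := Nat.pos_of_ne_zero (fun h => hs ((ZMod.val_eq_zero s).mp h))
    exact absurd (Nat.le_of_dvd h1 hdvd) (Nat.not_le.mpr (ZMod.val_lt s))
  · intro a _ b _ h
    have := hζ'.pow_inj (ZMod.val_lt a) (ZMod.val_lt b) h
    rw [← ZMod.natCast_rightInverse a, ← ZMod.natCast_rightInverse b, this]
  · intro μ hμ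
    rw [mem_primitiveRoots hp0] at hμ
    obtain ⟨i, hi, hie⟩ := hζ'.eq_pow_of_pow_eq_one hμ.pow_eq_one
    refine ⟨((i : ℕ) : ZMod p), ?_, ?_⟩
    · simp only [mem_sdiff, mem_univ, mem_singleton, true_and]
      intro h0
      have hdvd : p ∣ i := (ZMod.natCast_eq_zero_iff _ _).mp h0
      have hi0 : i = 0 := by
        rcases Nat.lt_or_ge i 1 with h | h
        · omega
        · exact absurd (Nat.le_of_dvd (by omega) hdvd) (by omega)
      rw [hi0, pow_zero] at hie
      have h1 : IsPrimitiveRoot (1 : ℂ) p := hie ▸ hμ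
      have := IsPrimitiveRoot.unique h1 (IsPrimitiveRoot.one)
      have := (Fact.out : p.Prime).two_le
      omega
    · rw [← pow_nat hζ'.pow_eq_one i]
      exact hie
  · intro s _
    rfl

end Aux9

namespace Aux9

lemma triangle (m : ℕ) (g : ℕ → ℕ → ℂ) :
    ∏ j ∈ Icc 1 m, ∏ k ∈ Ioc j m, (g j k * g k j)
      = ∏ j ∈ Icc 1 m, ∏ k ∈ (Icc 1 m).filter (fun k => j ≠ k), g j k := by
  have h1 : ∏ j ∈ Icc 1 m, ∏ k ∈ Ioc j m, (g j k * g k j)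
      = (∏ j ∈ Icc 1 m, ∏ k ∈ Ioc j m, g j k) * ∏ j ∈ Icc 1 m, ∏ k ∈ Ioc j m, g k j := by
    rw [← Finset.prod_mul_distrib]
    exact Finset.prod_congr rfl (fun j _ => Finset.prod_mul_distrib)
  have h2 : (∏ j ∈ Icc 1 m, ∏ k ∈ Ioc j m, g k j)
      = ∏ j ∈ Icc 1 m, ∏ k ∈ Ico 1 j, g j k := by
    refine Finset.prod_comm' ?_
    intro x y
    simp only [mem_Icc, mem_Ioc, mem_Ico]
    omega
  rw [h1, h2, ← Finset.prod_mul_distrib]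
  refine Finset.prod_congr rfl (fun j hj => ?_)
  rw [mem_Icc] at hj
  have hdisj : Disjoint (Ioc j m) (Ico 1 j) := by
    rw [Finset.disjoint_left]
    intro k hk hk'
    rw [mem_Ioc] at hk; rw [mem_Ico] at hk'
    omega
  rw [← Finset.prod_union hdisj]
  refine Finset.prod_congr ?_ (fun _ _ => rfl)
  ext k
  simp only [mem_union, mem_Ioc, mem_Ico, mem_filter, mem_Icc]
  omega

lemma nested_offDiag (m : ℕ) (F : ℕ → ℕ → ℂ) :
    ∏ j ∈ Icc 1 m, ∏ k ∈ (Icc 1 m).filter (fun k => j ≠ k), F j k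
      = ∏ x ∈ (Icc 1 m).offDiag, F x.1 x.2 := by
  classical
  have hset : (Icc 1 m).offDiag = ((Icc 1 m) ×ˢ (Icc 1 m)).filter (fun x => x.1 ≠ x.2) := by
    ext x
    simp only [mem_offDiag, mem_filter, mem_product]
    tauto
  calc ∏ j ∈ Icc 1 m, ∏ k ∈ (Icc 1 m).filter (fun k => j ≠ k), F j k
      = ∏ j ∈ Icc 1 m, ∏ k ∈ Icc 1 m, (if j ≠ k then F j k else 1) :=
        Finset.prod_congr rfl (fun j _ => Finset.prod_filter _ _)
    _ = ∏ x ∈ (Icc 1 m) ×ˢ (Icc 1 m), (if x.1 ≠ x.2 then F x.1 x.2 else 1) :=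
        (Finset.prod_product' (Icc 1 m) (Icc 1 m) (fun j k => if j ≠ k then F j k else 1)).symm
    _ = ∏ x ∈ ((Icc 1 m) ×ˢ (Icc 1 m)).filter (fun x => x.1 ≠ x.2), F x.1 x.2 :=
        (Finset.prod_filter _ _).symm
    _ = ∏ x ∈ (Icc 1 m).offDiag, F x.1 x.2 := by rw [hset]

lemma sum_sq_Icc (m : ℕ) : 6 * ∑ j ∈ Icc 1 m, j^2 = m * (m+1) * (2*m+1) := by
  induction m with
  | zero => simp
  | succ n ih =>
    rw [Finset.sum_Icc_succ_top (by omega), mul_add, ih]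
    ring

lemma dvd_T (p : ℕ) [Fact p.Prime] (hp3 : p % 4 = 3) :
    p ∣ ∑ j ∈ Icc 1 ((p-1)/2), ∑ k ∈ Ioc j ((p-1)/2), (j^2 + k^2) := by
  have hpm := two_m hp3
  set m := (p-1)/2 with hm
  have hT : ∑ j ∈ Icc 1 m, ∑ k ∈ Ioc j m, (j^2 + k^2)
      = (m - 1) * ∑ j ∈ Icc 1 m, j^2 := by
    have e1 : ∑ j ∈ Icc 1 m, ∑ k ∈ Ioc j m, (j^2 + k^2)
        = (∑ j ∈ Icc 1 m, ∑ k ∈ Ioc j m, j^2) + ∑ j ∈ Icc 1 m, ∑ k ∈ Ioc j m, k^2 := by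
      rw [← Finset.sum_add_distrib]
      exact Finset.sum_congr rfl (fun j _ => by rw [← Finset.sum_add_distrib])
    have e2 : ∑ j ∈ Icc 1 m, ∑ k ∈ Ioc j m, j^2 = ∑ j ∈ Icc 1 m, (m - j) * j^2 := by
      refine Finset.sum_congr rfl (fun j _ => ?_)
      rw [Finset.sum_const, Nat.card_Ioc, smul_eq_mul]
    have e3 : ∑ j ∈ Icc 1 m, ∑ k ∈ Ioc j m, k^2 = ∑ j ∈ Icc 1 m, (j - 1) * j^2 := by
      have : ∑ j ∈ Icc 1 m, ∑ k ∈ Ioc j m, k^2 = ∑ k ∈ Icc 1 m, ∑ j ∈ Ico 1 k, k^2 := by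
        refine Finset.sum_comm' ?_
        intro x y
        simp only [mem_Icc, mem_Ioc, mem_Ico]
        omega
      rw [this]
      refine Finset.sum_congr rfl (fun k _ => ?_)
      rw [Finset.sum_const, Nat.card_Ico, smul_eq_mul]
    rw [e1, e2, e3, ← Finset.sum_add_distrib, Finset.mul_sum]
    refine Finset.sum_congr rfl (fun j hj => ?_)
    rw [mem_Icc] at hj
    rw [← Nat.add_mul]
    congr 1
    omega
  rw [hT]
  by_cases h3 : p = 3
  · have : m = 1 := by omega
    rw [this]
    simp
  · have h6 : 6 * ((m - 1) * ∑ j ∈ Icc 1 m, j^2) = (m-1) * (m * (m+1)) * p := by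
      calc 6 * ((m - 1) * ∑ j ∈ Icc 1 m, j^2) = (m-1) * (6 * ∑ j ∈ Icc 1 m, j^2) := by ring
      _ = (m-1) * (m * (m+1) * (2*m+1)) := by rw [sum_sq_Icc]
      _ = (m-1) * (m * (m+1)) * (2*m+1) := by ring
      _ = (m-1) * (m * (m+1)) * p := by rw [← hpm]
    have hdvd : p ∣ 6 * ((m - 1) * ∑ j ∈ Icc 1 m, j^2) := ⟨(m-1) * (m * (m+1)), by rw [h6]; ring⟩
    rcases ((Fact.out : p.Prime).dvd_mul.mp hdvd) with h | h
    · exfalso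
      have := Nat.le_of_dvd (by norm_num) h
      interval_cases p <;> omega
    · exact h

lemma neg_one_pow_count (p : ℕ) [Fact p.Prime] (hp3 : p % 4 = 3) :
    ((-1 : ℂ)) ^ (∑ j ∈ Icc 1 ((p-1)/2), (Ioc j ((p-1)/2)).card) = (-1) ^ ((p-3)/4) := by
  obtain ⟨t, ht⟩ : ∃ t, p = 4*t+3 := ⟨(p-3)/4, by have := (Fact.out : p.Prime).two_le; omega⟩
  set m := (p-1)/2 with hm
  have hmt : m = 2*t+1 := by omega
  have hre : ∑ j ∈ Icc 1 m, (Ioc j m).card = ∑ i ∈ range m, i := by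
    refine Finset.sum_nbij' (fun j => m - j) (fun i => m - i) ?_ ?_ ?_ ?_ ?_
    · intro j hj; rw [mem_Icc] at hj; rw [mem_range]; omega
    · intro i hi; rw [mem_range] at hi; rw [mem_Icc]; omega
    · intro j hj; rw [mem_Icc] at hj; omega
    · intro i hi; rw [mem_range] at hi; omega
    · intro j hj; rw [Nat.card_Ioc]
  have h2 : (∑ j ∈ Icc 1 m, (Ioc j m).card) * 2 = m * (m - 1) := by
    rw [hre, Finset.sum_range_id_mul_two]
  have hNval : ∑ j ∈ Icc 1 m, (Ioc j m).card = 2*(t*t) + t := by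
    have h3 : (∑ j ∈ Icc 1 m, (Ioc j m).card) * 2 = (2*(t*t) + t) * 2 := by
      rw [h2, hmt]
      have : 2*t+1-1 = 2*t := by omega
      rw [this]; ring
    exact Nat.eq_of_mul_eq_mul_right (by norm_num) h3
  rw [hNval]
  have h4 : (p-3)/4 = t := by omega
  rw [h4, pow_add, pow_mul]
  norm_num

end Aux9


/-- for `p ≡ 3 (mod 4)`,
`∏_{1≤j<k≤(p-1)/2} (ζ^{j²} - ζ^{k²})² = (-p)^{(p-3)/4}`. -/
theorem prod_diff_zeta_sq_eq_of_three_mod_four (p : ℕ) [Fact p.Prime] (hp : p % 4 = 3)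
    (ζ : ℂ) (hζ : ζ = Complex.exp (2 * Real.pi * Complex.I / p)) :
    ∏ j ∈ Finset.Icc 1 ((p - 1) / 2), ∏ k ∈ Finset.Ioc j ((p - 1) / 2),
        (ζ ^ (j ^ 2) - ζ ^ (k ^ 2)) ^ 2 =
      (-(p : ℂ)) ^ ((p - 3) / 4) := by
  classical
  haveI : NeZero p := ⟨(Fact.out : p.Prime).ne_zero⟩
  have hζ' : IsPrimitiveRoot ζ p := by
    rw [hζ]
    exact Complex.isPrimitiveRoot_exp p (Fact.out : p.Prime).ne_zero
  have hz : ζ ^ p = 1 := hζ'.pow_eq_one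
  set m := (p - 1) / 2 with hm
  have hfac : ∀ j k : ℕ, (ζ ^ (j^2) - ζ ^ (k^2))^2
      = (-1) * Aux9.ee p ζ (((j:ZMod p))^2 + ((k:ZMod p))^2)
        * ((1 - Aux9.ee p ζ (((j:ZMod p))^2 - ((k:ZMod p))^2))
          * (1 - Aux9.ee p ζ (((k:ZMod p))^2 - ((j:ZMod p))^2))) := by
    intro j k
    have h1 : ((j^2 : ℕ) : ZMod p) = ((j:ZMod p))^2 := by push_cast; ring
    have h2 : ((k^2 : ℕ) : ZMod p) = ((k:ZMod p))^2 := by push_cast; ring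
    rw [Aux9.pow_nat hz (j^2), Aux9.pow_nat hz (k^2), Aux9.factor hz, h1, h2]
    ring
  rw [Finset.prod_congr rfl (fun j _ => Finset.prod_congr rfl (fun k _ => hfac j k))]
  simp only [Finset.prod_mul_distrib]
  have hsign : ∏ j ∈ Icc 1 m, ∏ k ∈ Ioc j m, (-1 : ℂ) = (-1) ^ ((p-3)/4) := by
    have h1 : ∀ j, ∏ k ∈ Ioc j m, (-1:ℂ) = (-1)^((Ioc j m).card) := fun j => Finset.prod_const _
    rw [Finset.prod_congr rfl (fun j _ => h1 j), Finset.prod_pow_eq_pow_sum]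
    exact Aux9.neg_one_pow_count p hp
  have hE : ∏ j ∈ Icc 1 m, ∏ k ∈ Ioc j m, Aux9.ee p ζ (((j:ZMod p))^2 + ((k:ZMod p))^2) = 1 := by
    have h1 : ∀ j ∈ Icc 1 m, ∏ k ∈ Ioc j m, Aux9.ee p ζ (((j:ZMod p))^2 + ((k:ZMod p))^2)
        = Aux9.ee p ζ (∑ k ∈ Ioc j m, (((j:ZMod p))^2 + ((k:ZMod p))^2)) :=
      fun j _ => (Aux9.ee_sum hz _ _).symm
    rw [Finset.prod_congr rfl h1, ← Aux9.ee_sum hz]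
    have h2 : (∑ j ∈ Icc 1 m, ∑ k ∈ Ioc j m, (((j:ZMod p))^2 + ((k:ZMod p))^2))
        = ((∑ j ∈ Icc 1 m, ∑ k ∈ Ioc j m, (j^2 + k^2) : ℕ) : ZMod p) := by
      push_cast
      rfl
    rw [h2, (ZMod.natCast_eq_zero_iff _ _).mpr (Aux9.dvd_T p hp), Aux9.ee_zero]
  have hB : (∏ j ∈ Icc 1 m, ∏ k ∈ Ioc j m,
        ((1 - Aux9.ee p ζ (((j:ZMod p))^2 - ((k:ZMod p))^2))
          * (1 - Aux9.ee p ζ (((k:ZMod p))^2 - ((j:ZMod p))^2)))) = (p:ℂ)^((p-3)/4) := by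
    have hmaps : ∀ x ∈ (Icc 1 m).offDiag,
        (((x.1 : ZMod p))^2 - ((x.2 : ZMod p))^2) ∈ (univ \ {0} : Finset (ZMod p)) := by
      intro x hx
      rw [mem_offDiag] at hx
      simp only [mem_sdiff, mem_univ, mem_singleton, true_and]
      intro h0
      exact hx.2.2 (Aux9.cast_sq_inj hp hx.1 hx.2.1 (sub_eq_zero.mp h0))
    calc ∏ j ∈ Icc 1 m, ∏ k ∈ Ioc j m,
          ((1 - Aux9.ee p ζ (((j:ZMod p))^2 - ((k:ZMod p))^2))
            * (1 - Aux9.ee p ζ (((k:ZMod p))^2 - ((j:ZMod p))^2)))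
        = ∏ j ∈ Icc 1 m, ∏ k ∈ (Icc 1 m).filter (fun k => j ≠ k),
            (1 - Aux9.ee p ζ (((j:ZMod p))^2 - ((k:ZMod p))^2)) :=
          Aux9.triangle m (fun j k => 1 - Aux9.ee p ζ (((j:ZMod p))^2 - ((k:ZMod p))^2))
      _ = ∏ x ∈ (Icc 1 m).offDiag,
            (1 - Aux9.ee p ζ (((x.1:ZMod p))^2 - ((x.2:ZMod p))^2)) :=
          Aux9.nested_offDiag m (fun j k => 1 - Aux9.ee p ζ (((j:ZMod p))^2 - ((k:ZMod p))^2))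
      _ = ∏ s' ∈ (univ \ {0} : Finset (ZMod p)),
            ∏ x ∈ (Icc 1 m).offDiag.filter
              (fun x => (((x.1 : ZMod p))^2 - ((x.2 : ZMod p))^2) = s'),
              (1 - Aux9.ee p ζ (((x.1:ZMod p))^2 - ((x.2:ZMod p))^2)) :=
          (Finset.prod_fiberwise_of_maps_to hmaps _).symm
      _ = ∏ s' ∈ (univ \ {0} : Finset (ZMod p)), (1 - Aux9.ee p ζ s')^((p-3)/4) := by
          refine Finset.prod_congr rfl (fun s' hs' => ?_)
          simp only [mem_sdiff, mem_univ, mem_singleton, true_and] at hs'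
          have hc : ∀ x ∈ (Icc 1 m).offDiag.filter
              (fun x => (((x.1 : ZMod p))^2 - ((x.2 : ZMod p))^2) = s'),
              (1 - Aux9.ee p ζ (((x.1:ZMod p))^2 - ((x.2:ZMod p))^2)) = 1 - Aux9.ee p ζ s' := by
            intro x hx
            rw [mem_filter] at hx
            rw [hx.2]
          rw [Finset.prod_congr rfl hc, Finset.prod_const, Aux9.fiber_card hp hs']
      _ = (∏ s' ∈ (univ \ {0} : Finset (ZMod p)), (1 - Aux9.ee p ζ s'))^((p-3)/4) :=
          Finset.prod_pow _ _ _
      _ = (p:ℂ)^((p-3)/4) := by rw [Aux9.prod_one_sub hζ']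
  have hB2 : (∏ j ∈ Icc 1 m, ∏ k ∈ Ioc j m, (1 - Aux9.ee p ζ (((j:ZMod p))^2 - ((k:ZMod p))^2)))
      * (∏ j ∈ Icc 1 m, ∏ k ∈ Ioc j m, (1 - Aux9.ee p ζ (((k:ZMod p))^2 - ((j:ZMod p))^2)))
      = (p:ℂ)^((p-3)/4) := by
    rw [← Finset.prod_mul_distrib, ← hB]
    exact Finset.prod_congr rfl (fun j _ => (Finset.prod_mul_distrib).symm)
  rw [hsign, hE, hB2, neg_pow]
  ring
end

section
/- Let $p$ be an odd prime, $n=(p-1)/2$, $\zeta = e^{2\pi i/p}$, and let $\nu = (1,\dots,1)^T \in \mathbb{C}^{n+1}$. Let $B = [\zeta^{-ij^2}]_{0\le i,j\le n}$ and let $A$ be the matrix obtained from $[\zeta^{ij^2}]_{0\le i,j\le n}$ by replacing all entries in its first row by $0$. Then the matrix $\widetilde{M} = -\nu\nu^T + 2AB^T$ has first row all $-1$ and, for $1\le i\le n$, $(i,j)$-entry equal to $-1 + 2\sum_{k=0}^{n}\zeta^{(i-j)k^2}$, and $\det\widetilde{M} = -2^{n}\sum_{k=0}^{n}\det B^{(k)}\det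 A^{(k)}$, where $A^{(k)}$ (resp. $B^{(k)}$) is obtained from $A$ (resp. $B$) by replacing all entries of the $k$-th column by $1$. -/
open Matrix Finset Complex Real

lemma det_add_outer {m : ℕ} (H : Matrix (Fin m) (Fin m) ℂ) (u v : Fin m → ℂ) :
    (H + Matrix.of fun i j => u i * v j).det
      = H.det + ∑ k, u k * (H.updateRow k v).det := by
  classical
  have h1 : (H + Matrix.of fun i j => u i * v j)
      = Matrix.of ((fun i => u i • v) + fun i => H i) := by
    ext i j
    simp [smul_eq_mul, add_comm]
  rw [h1]
  have h2 : (Matrix.of ((fun i => u i • v) + fun i => H i)).det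
      = ∑ s : Finset (Fin m),
          Matrix.detRowAlternating (R := ℂ) (n := Fin m)
            (s.piecewise (fun i => u i • v) (fun i => H i)) :=
    (Matrix.detRowAlternating (R := ℂ) (n := Fin m)).toMultilinearMap.map_add_univ
      (fun i => u i • v) (fun i => H i)
  rw [h2]
  have key : ∀ s : Finset (Fin m),
      Matrix.detRowAlternating (R := ℂ) (n := Fin m)
        (s.piecewise (fun i => u i • v) (fun i => H i))
      = (∏ i ∈ s, u i) * (Matrix.of (s.piecewise (fun _ => v) (fun i => H i))).det := by
    intro s
    have h3 : s.piecewise (fun i => u i • v) (fun i => H i)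
        = s.piecewise (fun i => u i • (s.piecewise (fun _ => v) (fun i => H i)) i)
            (s.piecewise (fun _ => v) (fun i => H i)) := by
      ext i j
      by_cases hi : i ∈ s <;> simp [hi, Finset.piecewise]
    rw [h3]
    exact ((Matrix.detRowAlternating (R := ℂ) (n := Fin m)).toMultilinearMap.map_piecewise_smul
      u (s.piecewise (fun _ => v) (fun i => H i)) s).trans (by rw [smul_eq_mul]; rfl)
  simp_rw [key]
  set T : Finset (Finset (Fin m)) := insert ∅ (Finset.univ.image ({·})) with hT
  have hzero : ∀ s ∈ (Finset.univ : Finset (Finset (Fin m))), s ∉ T →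
      (∏ i ∈ s, u i) * (Matrix.of (s.piecewise (fun _ => v) (fun i => H i))).det = 0 := by
    intro s _ hs
    have hcard : 1 < s.card := by
      rcases Nat.lt_or_ge 1 s.card with h | h
      · exact h
      · exfalso
        interval_cases h' : s.card
        · exact hs (by simp [hT, Finset.card_eq_zero.mp h'])
        · obtain ⟨a, ha⟩ := Finset.card_eq_one.mp h'
          exact hs (by simp [hT, ha])
    obtain ⟨a, ha, b, hb, hab⟩ := Finset.one_lt_card.mp hcard
    have := Matrix.det_zero_of_row_eq hab
      (M := Matrix.of (s.piecewise (fun _ => v) (fun i => H i)))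
      (by
        show s.piecewise (fun _ => v) (fun i => H i) a
          = s.piecewise (fun _ => v) (fun i => H i) b
        rw [Finset.piecewise_eq_of_mem _ _ _ ha, Finset.piecewise_eq_of_mem _ _ _ hb])
    rw [this, mul_zero]
  rw [← Finset.sum_subset (Finset.subset_univ T) hzero]
  rw [hT, Finset.sum_insert (by simp), Finset.sum_image (fun x _ y _ h => Finset.singleton_injective h)]
  simp only [Finset.prod_empty, Finset.piecewise_empty, one_mul, Finset.prod_singleton,
    Finset.piecewise_singleton]
  rfl

/-- the decomposition `M̃ = -ννᵀ + 2ABᵀ`, its entries, and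
`det M̃ = -2ⁿ ∑ₖ det B⁽ᵏ⁾ det A⁽ᵏ⁾`. -/
theorem M_tilde_decomposition (p : ℕ) [Fact p.Prime] (hp : p ≠ 2)
    (n : ℕ) (hn : n = (p - 1) / 2)
    (ζ : ℂ) (hζ : ζ = Complex.exp (2 * Real.pi * Complex.I / p))
    (A B : Matrix (Fin (n + 1)) (Fin (n + 1)) ℂ)
    (hA : ∀ i j, A i j = if (i : ℕ) = 0 then 0 else ζ ^ ((i : ℕ) * (j : ℕ) ^ 2))
    (hB : ∀ i j, B i j = ζ ^ (-((i : ℤ) * (j : ℤ) ^ 2)))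
    (M : Matrix (Fin (n + 1)) (Fin (n + 1)) ℂ)
    (hMdef : M = -Matrix.vecMulVec (fun _ => 1) (fun _ => 1) + 2 • (A * Bᵀ)) :
    (∀ i j, M i j =
      if (i : ℕ) = 0 then -1
      else -1 + 2 * ∑ k ∈ Finset.range (n + 1),
        ζ ^ (((i : ℤ) - (j : ℤ)) * (k : ℤ) ^ 2)) ∧
    M.det = -(2 : ℂ) ^ n *
      ∑ k : Fin (n + 1),
        (B.updateCol k (fun _ => 1)).det * (A.updateCol k (fun _ => 1)).det := by
  have hζ0 : ζ ≠ 0 := by rw [hζ]; exact Complex.exp_ne_zero _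
  constructor
  · intro i j
    rw [hMdef]
    rw [Matrix.add_apply, Matrix.neg_apply, Matrix.vecMulVec_apply, Matrix.smul_apply,
      Matrix.mul_apply]
    by_cases h : (i : ℕ) = 0
    · have hA0 : ∀ k, A i k = 0 := fun k => by rw [hA, if_pos h]
      simp [h, hA0]
    · rw [if_neg h]
      simp only [Matrix.transpose_apply, one_mul, smul_eq_mul, nsmul_eq_mul, Nat.cast_ofNat]
      congr 1
      congr 1
      rw [← Fin.sum_univ_eq_sum_range (fun k => ζ ^ (((i : ℤ) - (j : ℤ)) * (k : ℤ) ^ 2)) (n + 1)]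
      refine Finset.sum_congr rfl fun k _ => ?_
      rw [hA, hB, if_neg h, ← zpow_natCast ζ ((i : ℕ) * (k : ℕ) ^ 2), ← zpow_add₀ hζ0]
      congr 1
      push_cast
      ring
  · have hM' : M = 2 • (A * Bᵀ) + Matrix.of
        (fun i j => (fun _ : Fin (n + 1) => (-1 : ℂ)) i * (fun _ : Fin (n + 1) => (1 : ℂ)) j) := by
      rw [hMdef]
      ext i j
      simp [Matrix.vecMulVec_apply]
      ring
    rw [hM', det_add_outer]
    have hdetH : (2 • (A * Bᵀ)).det = 0 := by
      apply Matrix.det_eq_zero_of_row_eq_zero 0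
      intro j'
      simp [Matrix.smul_apply, Matrix.mul_apply, hA]
    rw [hdetH, zero_add]
    set w : Fin (n + 1) → ℂ := Matrix.adjugate B *ᵥ (fun _ => 1) with hw
    have hwj : ∀ j, w j = (B.updateCol j (fun _ => 1)).det := by
      intro j
      rw [hw, ← Matrix.cramer_eq_adjugate_mulVec, Matrix.cramer_apply]
    have hup : ∀ k : Fin (n + 1), ((2 • (A * Bᵀ)).updateRow k (fun _ => (1 : ℂ))).det
        = 2 ^ n * (Matrix.adjugate Aᵀ *ᵥ w) k := by
      intro k
      have hHT : (2 • (A * Bᵀ))ᵀ = 2 • (B * Aᵀ) := by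
        rw [Matrix.transpose_smul, Matrix.transpose_mul, Matrix.transpose_transpose]
      rw [← Matrix.det_transpose, ← Matrix.updateCol_transpose, hHT,
        ← Matrix.cramer_apply, Matrix.cramer_eq_adjugate_mulVec,
        ← Nat.cast_smul_eq_nsmul ℂ 2 (B * Aᵀ),
        Matrix.adjugate_smul, Matrix.adjugate_mul_distrib]
      simp only [Fintype.card_fin, Nat.add_sub_cancel, Matrix.smul_mulVec,
        Pi.smul_apply, smul_eq_mul, ← Matrix.mulVec_mulVec]
      rw [hw]
      norm_num
    calc ∑ k : Fin (n + 1), (fun _ : Fin (n + 1) => (-1 : ℂ)) k *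
            ((2 • (A * Bᵀ)).updateRow k fun _ => 1).det
        = ∑ k : Fin (n + 1), (-(2 : ℂ) ^ n) * (Matrix.adjugate Aᵀ *ᵥ w) k := by
          refine Finset.sum_congr rfl fun k _ => ?_
          rw [hup k]; ring
      _ = (-(2 : ℂ) ^ n) * ∑ k : Fin (n + 1), ∑ j : Fin (n + 1), Matrix.adjugate Aᵀ k j * w j := by
          rw [← Finset.mul_sum]
          rfl
      _ = (-(2 : ℂ) ^ n) * ∑ j : Fin (n + 1), (∑ k : Fin (n + 1), Matrix.adjugate Aᵀ k j) * w j := by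
          rw [Finset.sum_comm]
          simp_rw [Finset.sum_mul]
      _ = -(2 : ℂ) ^ n * ∑ k : Fin (n + 1),
            (B.updateCol k (fun _ => 1)).det * (A.updateCol k (fun _ => 1)).det := by
          congr 1
          refine Finset.sum_congr rfl fun j _ => ?_
          rw [hwj j, mul_comm]
          congr 1
          have h1 : ∀ k, Matrix.adjugate Aᵀ k j = Matrix.adjugate A j k := by
            intro k
            rw [← Matrix.adjugate_transpose]
            rfl
          simp_rw [h1]
          have h2 := (Matrix.cramer_eq_adjugate_mulVec A (fun _ => (1 : ℂ)))
          have h3 : (Matrix.adjugate A *ᵥ fun _ => (1 : ℂ)) j = ∑ k, Matrix.adjugate A j k := by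
            simp [Matrix.mulVec, dotProduct]
          rw [← h3, ← h2, Matrix.cramer_apply]
end
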